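/- Let G be a finite group, φ ∈ Aut(G), and Δ(G,φ) ≤ U ≤ G × G. Suppose that for some i ∈ {1,2}: (i) k_i(U) ∩ G' is nontrivial, and (ii) k_i(U) ≤ Z(G). Then k_i(U') ≠ G' ∩ k_i(U); in particular U is not extensible. -/

import Mathlib

def twistedDiag {G : Type*} [Group G] (φ : G ≃* G) : Subgroup (G × G) :=
  ((MonoidHom.id G).prod φ.toMonoidHom).range

def k1 {G H : Type*} [Group G] [Group H] (U : Subgroup (G × H)) : Subgroup G :=
  U.comap (MonoidHom.inl G H)

def k2 {G H : Type*} [Group G] [Group H] (U : Subgroup (G × H)) : Subgroup H :=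
  U.comap (MonoidHom.inr G H)

open scoped commutatorElement

lemma mem_twistedDiag {G : Type*} [Group G] (φ : G ≃* G) {x y : G} :
    (x, y) ∈ twistedDiag φ ↔ φ x = y := by
  simp [twistedDiag, MonoidHom.mem_range, Prod.ext_iff]

lemma comm_central_left {G : Type*} [Group G] {z : G} (hz : z ∈ Subgroup.center G)
    (a c : G) : ⁅z * a, c⁆ = ⁅a, c⁆ := by
  have hzi := Subgroup.mem_center_iff.mp (inv_mem hz) (a * c * a⁻¹)
  simp only [commutatorElement_def, mul_inv_rev]
  calc z * a * c * (a⁻¹ * z⁻¹) * c⁻¹ = z * (a * c * a⁻¹ * z⁻¹) * c⁻¹ := by group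
    _ = z * (z⁻¹ * (a * c * a⁻¹)) * c⁻¹ := by rw [hzi]
    _ = a * c * a⁻¹ * c⁻¹ := by group

lemma comm_central {G : Type*} [Group G] {z w : G} (hz : z ∈ Subgroup.center G)
    (hw : w ∈ Subgroup.center G) (b d : G) : ⁅z * b, w * d⁆ = ⁅b, d⁆ := by
  rw [comm_central_left hz, ← commutatorElement_inv, comm_central_left hw,
    commutatorElement_inv]

lemma mem_k1 {G H : Type*} [Group G] [Group H] {U : Subgroup (G × H)} {x : G} :
    x ∈ k1 U ↔ (x, 1) ∈ U := Iff.rfl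

lemma mem_k2 {G H : Type*} [Group G] [Group H] {U : Subgroup (G × H)} {y : H} :
    y ∈ k2 U ↔ (1, y) ∈ U := Iff.rfl

lemma prod_commutator {G H : Type*} [Group G] [Group H] (a c : G) (b d : H) :
    ⁅((a, b) : G × H), (c, d)⁆ = (⁅a, c⁆, ⁅b, d⁆) := rfl

lemma comm_le_diag1 {G : Type*} [Group G] (φ : G ≃* G) (U : Subgroup (G × G))
    (hU : twistedDiag φ ≤ U) (hc : k1 U ≤ Subgroup.center G) :
    ⁅U, U⁆ ≤ twistedDiag φ := by
  rw [Subgroup.commutator_le]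
  rintro ⟨a, b⟩ hp ⟨c, d⟩ hq
  have hb : ((φ.symm b : G), b) ∈ U := hU ((mem_twistedDiag φ).mpr (by simp))
  have hd : ((φ.symm d : G), d) ∈ U := hU ((mem_twistedDiag φ).mpr (by simp))
  have hz : a * (φ.symm b)⁻¹ ∈ Subgroup.center G := by
    apply hc; rw [mem_k1]
    have := mul_mem hp (inv_mem hb)
    simpa [Prod.ext_iff] using this
  have hw : c * (φ.symm d)⁻¹ ∈ Subgroup.center G := by
    apply hc; rw [mem_k1]
    have := mul_mem hq (inv_mem hd)
    simpa [Prod.ext_iff] using this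
  rw [prod_commutator, mem_twistedDiag]
  have ha : a = (a * (φ.symm b)⁻¹) * φ.symm b := by group
  have hcc : c = (c * (φ.symm d)⁻¹) * φ.symm d := by group
  rw [ha, hcc, comm_central hz hw, map_commutatorElement φ]
  simp

lemma comm_le_diag2 {G : Type*} [Group G] (φ : G ≃* G) (U : Subgroup (G × G))
    (hU : twistedDiag φ ≤ U) (hc : k2 U ≤ Subgroup.center G) :
    ⁅U, U⁆ ≤ twistedDiag φ := by
  rw [Subgroup.commutator_le]
  rintro ⟨a, b⟩ hp ⟨c, d⟩ hq
  have hb : ((a : G), φ a) ∈ U := hU ((mem_twistedDiag φ).mpr rfl)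
  have hd : ((c : G), φ c) ∈ U := hU ((mem_twistedDiag φ).mpr rfl)
  have hz : b * (φ a)⁻¹ ∈ Subgroup.center G := by
    apply hc; rw [mem_k2]
    have := mul_mem hp (inv_mem hb)
    simpa [Prod.ext_iff] using this
  have hw : d * (φ c)⁻¹ ∈ Subgroup.center G := by
    apply hc; rw [mem_k2]
    have := mul_mem hq (inv_mem hd)
    simpa [Prod.ext_iff] using this
  rw [prod_commutator, mem_twistedDiag]
  have hbb : b = (b * (φ a)⁻¹) * φ a := by group
  have hdd : d = (d * (φ c)⁻¹) * φ c := by group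
  conv_rhs => rw [hbb, hdd]
  rw [comm_central hz hw, map_commutatorElement φ]

theorem inextensible_of_central_kernel {G : Type*} [Group G] [Finite G] (φ : G ≃* G)
    (U : Subgroup (G × G)) (hU : twistedDiag φ ≤ U) :
    ((k1 U ⊓ commutator G ≠ ⊥ ∧ k1 U ≤ Subgroup.center G) →
        k1 ⁅U, U⁆ ≠ commutator G ⊓ k1 U) ∧
      ((k2 U ⊓ commutator G ≠ ⊥ ∧ k2 U ≤ Subgroup.center G) →
        k2 ⁅U, U⁆ ≠ commutator G ⊓ k2 U) := by
  constructor
  · rintro ⟨hne, hc⟩ heq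
    have hbot : k1 ⁅U, U⁆ = ⊥ := by
      rw [eq_bot_iff]
      intro x hx
      have : (x, 1) ∈ twistedDiag φ := comm_le_diag1 φ U hU hc hx
      rw [mem_twistedDiag] at this
      have : x = 1 := by
        have := congrArg φ.symm this
        simpa using this
      simp [this, Subgroup.mem_bot]
    rw [hbot] at heq
    exact hne (by rw [inf_comm]; exact heq.symm)
  · rintro ⟨hne, hc⟩ heq
    have hbot : k2 ⁅U, U⁆ = ⊥ := by
      rw [eq_bot_iff]
      intro y hy
      have : ((1 : G), y) ∈ twistedDiag φ := comm_le_diag2 φ U hU hc hy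
      rw [mem_twistedDiag] at this
      simp at this
      simp [this, Subgroup.mem_bot]
    rw [hbot] at heq
    exact hne (by rw [inf_comm]; exact heq.symm)
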